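/- arXiv:1408.2646 — 3 statements merged into one kernel-verified Lean document; each statement's English description precedes it below -/
import Mathlib

section
/- Let d > 1 be an integer and define ν(n) := ∑_{m ∣ n} μ(n/m)(d^m + 1) for n ≥ 1. Then for every n ≥ 2, ν(n) ≥ 0, and moreover ν(n) ≤ d^n + 1. -/
open ArithmeticFunction Finset

private lemma nu_geo (d : ℤ) (hd : 1 < d) : ∀ k : ℕ,
    ∑ m ∈ Finset.Icc 1 k, (d ^ m + 1) ≤ d ^ (2 * k) + 1 := by
  intro k
  induction k with
  | zero => simp
  | succ k ih =>
    rw [Finset.sum_Icc_succ_top (by omega)]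
    have h1 : (1:ℤ) ≤ d ^ (2 * k) := one_le_pow₀ (by omega)
    have h2 : d ^ (k + 1) ≤ d ^ (2 * k + 1) := pow_le_pow_right₀ (by omega) (by omega)
    have h3 : d ^ (2 * k + 1) = d * d ^ (2 * k) := by ring
    have h4 : d ^ (2 * (k + 1)) = d * d * d ^ (2 * k) := by ring
    have h5 : (1:ℤ) * 1 ≤ (d * d - d - 1) * d ^ (2 * k) :=
      mul_le_mul (by nlinarith) h1 zero_le_one (by nlinarith)
    linarith

private lemma proper_le_half {m n : ℕ} (hn : 0 < n) (hm : m ∈ n.properDivisors) :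
    m ∈ Finset.Icc 1 (n / 2) := by
  rw [Nat.mem_properDivisors] at hm
  have hm0 : 0 < m := Nat.pos_of_mem_properDivisors (by rwa [Nat.mem_properDivisors])
  obtain ⟨⟨k, hk⟩, hlt⟩ := hm
  have hk2 : 2 ≤ k := by
    rcases k with _ | _ | k
    · simp at hk; omega
    · simp at hk; omega
    · omega
  have : m * 2 ≤ n := by calc m * 2 ≤ m * k := by exact Nat.mul_le_mul_left m hk2
                                  _ = n := hk.symm
  simp only [Finset.mem_Icc]
  constructor
  · omega
  · exact Nat.le_div_iff_mul_le (by omega) |>.2 this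

private lemma nu_nonneg (d : ℤ) (hd : 1 < d) (n : ℕ) (hn : 2 ≤ n) :
    0 ≤ ∑ m ∈ n.divisors, (moebius (n / m) : ℤ) * (d ^ m + 1) := by
  have hn0 : 0 < n := by omega
  rw [← Nat.cons_self_properDivisors hn0.ne', Finset.sum_cons, Nat.div_self hn0]
  simp only [moebius_apply_one, Int.cast_one, one_mul]
  have hbound : ∀ m ∈ n.properDivisors,
      -(d ^ m + 1) ≤ (moebius (n / m) : ℤ) * (d ^ m + 1) := by
    intro m hm
    have hpos : (0:ℤ) < d ^ m + 1 := by positivity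
    have habs : (moebius (n / m) : ℤ) = -1 ∨ (moebius (n / m) : ℤ) = 0 ∨
        (moebius (n / m) : ℤ) = 1 := by
      rcases moebius_eq_or (n / m) with h | h | h <;> simp [h]
    rcases habs with h | h | h <;> rw [h] <;> nlinarith
  have h1 : -(∑ m ∈ n.properDivisors, (d ^ m + 1)) ≤
      ∑ m ∈ n.properDivisors, (moebius (n / m) : ℤ) * (d ^ m + 1) := by
    rw [← Finset.sum_neg_distrib]
    exact Finset.sum_le_sum fun m hm => hbound m hm
  have h2 : ∑ m ∈ n.properDivisors, (d ^ m + 1) ≤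
      ∑ m ∈ Finset.Icc 1 (n / 2), (d ^ m + 1) := by
    apply Finset.sum_le_sum_of_subset_of_nonneg
    · intro m hm; exact proper_le_half hn0 hm
    · intro i _ _; positivity
  have h3 : (d:ℤ) ^ (2 * (n / 2)) ≤ d ^ n :=
    pow_le_pow_right₀ (by omega) (by omega)
  have := nu_geo d hd (n / 2)
  linarith

private lemma nu_inversion (d : ℤ) (hd : 1 < d) (n : ℕ) (hn : 0 < n) :
    ∑ i ∈ n.divisors, (∑ m ∈ i.divisors, (moebius (i / m) : ℤ) * (d ^ m + 1))
      = d ^ n + 1 := by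
  have := (sum_eq_iff_sum_mul_moebius_eq
    (f := fun i => ∑ m ∈ i.divisors, (moebius (i / m) : ℤ) * (d ^ m + 1))
    (g := fun n => d ^ n + 1)).2 ?_ n hn
  · exact this
  · intro m hm
    rw [← Nat.sum_divisorsAntidiagonal' (f := fun a b => (moebius a : ℤ) * (d ^ b + 1))]
    rfl

theorem dynatomic_degree_nonneg_le (d : ℤ) (hd : 1 < d) (n : ℕ) (hn : 2 ≤ n) :
    0 ≤ ∑ m ∈ n.divisors, (moebius (n / m) : ℤ) * (d ^ m + 1) ∧
      ∑ m ∈ n.divisors, (moebius (n / m) : ℤ) * (d ^ m + 1) ≤ d ^ n + 1 := by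
  refine ⟨nu_nonneg d hd n hn, ?_⟩
  have hinv := nu_inversion d hd n (by omega)
  rw [← Nat.cons_self_properDivisors (show n ≠ 0 by omega), Finset.sum_cons] at hinv
  have hterms : 0 ≤ ∑ i ∈ n.properDivisors,
      (∑ m ∈ i.divisors, (moebius (i / m) : ℤ) * (d ^ m + 1)) := by
    apply Finset.sum_nonneg
    intro i hi
    have hi1 : 1 ≤ i := (Nat.one_le_iff_ne_zero.2
      (Nat.pos_of_mem_properDivisors hi).ne')
    rcases eq_or_lt_of_le hi1 with h | h
    · simp [← h, Nat.divisors_one]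
      omega
    · exact nu_nonneg d hd i h
  linarith
end

section
/- Let (φ_j) be a sequence of subharmonic functions on a domain U ⊆ ℝⁿ that is locally uniformly bounded above. If φ(x) := lim_{j→∞} φ_j(x) exists for Lebesgue-almost every x ∈ U, then φ_j → φ in L¹_loc(U). -/
open MeasureTheory Metric

/-- A function is subharmonic on an open set `U` in Euclidean space if it is
upper semicontinuous on `U`, locally integrable on `U`, and satisfies the
sub-mean value inequality on closed balls contained in `U`. -/
def SubharmonicOn {n : ℕ} (φ : EuclideanSpace ℝ (Fin n) → ℝ)
    (U : Set (EuclideanSpace ℝ (Fin n))) : Prop :=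
  UpperSemicontinuousOn φ U ∧ LocallyIntegrableOn φ U volume ∧
    ∀ x ∈ U, ∀ r > (0 : ℝ), closedBall x r ⊆ U →
      φ x ≤ ⨍ y in closedBall x r, φ y ∂volume

open Filter

section
variable {n : ℕ}
local notation "X" => EuclideanSpace ℝ (Fin n)

lemma sub_mean {φ : X → ℝ} {U : Set X}
    (hm : ∀ x ∈ U, ∀ r > (0 : ℝ), closedBall x r ⊆ U →
      φ x ≤ ⨍ y in closedBall x r, φ y ∂volume)
    {x : X} {r : ℝ} (hx : x ∈ U) (hr : 0 < r)
    (hB : closedBall x r ⊆ U) :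
    (volume (closedBall x r)).toReal * φ x ≤ ∫ y in closedBall x r, φ y := by
  have h := hm x hx r hr hB
  rw [setAverage_eq] at h
  have hv : (0:ℝ) < (volume (closedBall x r)).toReal :=
    ENNReal.toReal_pos (measure_closedBall_pos volume x hr).ne' measure_closedBall_lt_top.ne
  rw [smul_eq_mul] at h
  calc (volume (closedBall x r)).toReal * φ x
      ≤ (volume (closedBall x r)).toReal *
        ((volume (closedBall x r)).toReal⁻¹ * ∫ y in closedBall x r, φ y) :=
        mul_le_mul_of_nonneg_left h hv.le
    _ = ∫ y in closedBall x r, φ y := by field_simp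

lemma diff_bound {f : X → ℝ} {s t : Set X} (hs : IsCompact s)
    (ht : MeasurableSet t) (hts : t ⊆ s) (hint : IntegrableOn f s volume)
    {M C : ℝ} (hM : ∀ y ∈ s, f y ≤ M) (hC : C ≤ ∫ y in s, f y) :
    C - max M 0 * (volume s).toReal ≤ ∫ y in t, f y := by
  have hdiff : ∫ y in s \ t, f y = (∫ y in s, f y) - ∫ y in t, f y :=
    integral_diff ht hint hts
  have h1 : ∫ y in s \ t, f y ≤ max M 0 * (volume s).toReal := by
    have hsub : s \ t ⊆ s := Set.diff_subset
    have : ∫ y in s \ t, f y ≤ ∫ y in s \ t, (fun _ => max M 0) y := by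
      apply setIntegral_mono_on (hint.mono_set hsub) (integrableOn_const ?_)
        (hs.measurableSet.diff ht)
      · intro y hy; exact le_trans (hM y hy.1) (le_max_left _ _)
      · exact (lt_of_le_of_lt (measure_mono hsub) hs.measure_lt_top).ne
    rw [setIntegral_const, smul_eq_mul] at this
    calc ∫ y in s \ t, f y ≤ (volume (s \ t)).toReal * max M 0 := this
      _ ≤ (volume s).toReal * max M 0 := by
          apply mul_le_mul_of_nonneg_right _ (le_max_right _ _)
          exact ENNReal.toReal_mono hs.measure_lt_top.ne (measure_mono hsub)
      _ = max M 0 * (volume s).toReal := mul_comm _ _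
  linarith

lemma lintegral_biUnion_finset_le {α : Type*} (g : X → ENNReal) (t : Finset α)
    (B : α → Set X) :
    ∫⁻ y in ⋃ x ∈ t, B x, g y ∂volume ≤ ∑ x ∈ t, ∫⁻ y in B x, g y ∂volume := by
  classical
  induction t using Finset.induction_on with
  | empty => simp
  | insert a s hx ih =>
    rw [Finset.set_biUnion_insert, Finset.sum_insert hx]
    exact le_trans (lintegral_union_le _ _ _) (add_le_add le_rfl ih)

lemma lower_bound (U : Set X) (hU : IsOpen U) (hUc : IsConnected U)
    (φseq : ℕ → X → ℝ) (hsub : ∀ j, SubharmonicOn (φseq j) U)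
    (hbdd : ∀ K : Set X, K ⊆ U → IsCompact K →
      ∃ M : ℝ, ∀ j, ∀ x ∈ K, φseq j x ≤ M)
    (hpt : ∃ x₀ ∈ U, BddBelow (Set.range fun j => φseq j x₀))
    {K : Set X} (hKU : K ⊆ U) (hK : IsCompact K) :
    ∃ C : ℝ, ∀ j, C ≤ ∫ y in K, φseq j y := by
  classical
  have hInt : ∀ j, ∀ s : Set X, s ⊆ U → IsCompact s → IntegrableOn (φseq j) s volume :=
    fun j s hsU hs => (hsub j).2.1.integrableOn_compact_subset hsU hs
  -- the set of points with uniformly lower-bounded ball integrals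
  set S : Set X := {x | ∃ ρ : ℝ, 0 < ρ ∧ closedBall x ρ ⊆ U ∧
      ∃ C : ℝ, ∀ j, C ≤ ∫ y in closedBall x ρ, φseq j y} with hS
  -- shrink/move the ball
  have hshrink : ∀ x ρ C, 0 < ρ → closedBall x ρ ⊆ U →
      (∀ j, C ≤ ∫ y in closedBall x ρ, φseq j y) →
      ∀ x' ρ', closedBall x' ρ' ⊆ closedBall x ρ →
      ∃ C' : ℝ, ∀ j, C' ≤ ∫ y in closedBall x' ρ', φseq j y := by
    intro x ρ C hρ hBU hC x' ρ' hsub'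
    obtain ⟨M, hM⟩ := hbdd (closedBall x ρ) hBU (isCompact_closedBall x ρ)
    refine ⟨C - max M 0 * (volume (closedBall x ρ)).toReal, fun j => ?_⟩
    exact diff_bound (isCompact_closedBall x ρ) measurableSet_closedBall hsub'
      (hInt j _ hBU (isCompact_closedBall x ρ)) (hM j) (hC j)
  -- S is open
  have hSopen : IsOpen S := by
    rw [Metric.isOpen_iff]
    rintro x ⟨ρ, hρ, hBU, C, hC⟩
    refine ⟨ρ/2, by linarith, fun x' hx' => ?_⟩
    rw [mem_ball] at hx'
    have hsub' : closedBall x' (ρ/2) ⊆ closedBall x ρ := by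
      intro z hz
      rw [mem_closedBall] at hz ⊢
      have := dist_triangle z x' x
      have hd : dist x' x < ρ/2 := hx'
      linarith
    obtain ⟨C', hC'⟩ := hshrink x ρ C hρ hBU hC x' (ρ/2) hsub'
    exact ⟨ρ/2, by linarith, hsub'.trans hBU, C', hC'⟩
  -- S is closed in U
  have hSclosed : ∀ x ∈ U, x ∈ closure S → x ∈ S := by
    intro x hxU hxcl
    obtain ⟨ε, hε, hball⟩ := Metric.isOpen_iff.1 hU x hxU
    set ρ := ε/8 with hρdef
    have hρ : 0 < ρ := by positivity
    obtain ⟨x', hx'S, hx'd⟩ := Metric.mem_closure_iff.1 hxcl ρ hρ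
    obtain ⟨ρ₀, hρ₀, hB₀U, C₀, hC₀⟩ := hx'S
    set ρ₁ := min ρ₀ ρ with hρ₁def
    have hρ₁ : 0 < ρ₁ := lt_min hρ₀ hρ
    have hsub₁ : closedBall x' ρ₁ ⊆ closedBall x' ρ₀ :=
      closedBall_subset_closedBall (min_le_left _ _)
    obtain ⟨C₁, hC₁⟩ := hshrink x' ρ₀ C₀ hρ₀ hB₀U hC₀ x' ρ₁ hsub₁
    have hvol₁pos : (0:ℝ) < (volume (closedBall x' ρ₁)).toReal :=
      ENNReal.toReal_pos (measure_closedBall_pos volume x' hρ₁).ne'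
        measure_closedBall_lt_top.ne
    set c := C₁ / (volume (closedBall x' ρ₁)).toReal with hcdef
    -- the big ball
    have hbigU : closedBall x (5*ρ) ⊆ U := by
      refine subset_trans ?_ hball
      intro z hz
      rw [mem_closedBall] at hz
      rw [mem_ball]
      calc dist z x ≤ 5*ρ := hz
        _ < ε := by rw [hρdef]; linarith
    obtain ⟨M, hM⟩ := hbdd (closedBall x (5*ρ)) hbigU (isCompact_closedBall _ _)
    set v₃ := (volume (closedBall x (3*ρ))).toReal with hv₃def
    refine ⟨ρ, hρ, (closedBall_subset_closedBall (by linarith)).trans hbigU,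
      v₃ * c - max M 0 * v₃, fun j => ?_⟩
    -- find a point above the average on the small ball
    have hint₁ : IntegrableOn (φseq j) (closedBall x' ρ₁) volume :=
      hInt j _ (hsub₁.trans hB₀U) (isCompact_closedBall _ _)
    obtain ⟨y, hy, hyavg⟩ := exists_setAverage_le
      (μ := volume) (s := closedBall x' ρ₁) (f := φseq j)
      (measure_closedBall_pos volume x' hρ₁).ne' measure_closedBall_lt_top.ne hint₁
    have hyc : c ≤ φseq j y := by
      refine le_trans ?_ hyavg
      rw [setAverage_eq, smul_eq_mul, hcdef]
      rw [div_eq_inv_mul]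
      exact mul_le_mul_of_nonneg_left (hC₁ j) (by positivity)
    -- y is within 2ρ of x
    have hyx : dist y x ≤ 2*ρ := by
      have h1 : dist y x' ≤ ρ₁ := mem_closedBall.1 hy
      have h2 : dist x' x < ρ := by rw [dist_comm]; exact hx'd
      have h3 : ρ₁ ≤ ρ := min_le_right _ _
      calc dist y x ≤ dist y x' + dist x' x := dist_triangle _ _ _
        _ ≤ 2*ρ := by linarith
    have hyballU : closedBall y (3*ρ) ⊆ closedBall x (5*ρ) := by
      intro z hz
      rw [mem_closedBall] at hz ⊢
      calc dist z x ≤ dist z y + dist y x := dist_triangle _ _ _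
        _ ≤ 5*ρ := by linarith
    have hyU : y ∈ U := hbigU (hyballU (mem_closedBall_self (by linarith)))
    -- mean value inequality at y
    have hmean := sub_mean (hsub j).2.2 hyU (by linarith : (0:ℝ) < 3*ρ)
      (hyballU.trans hbigU)
    have hvoly : (volume (closedBall y (3*ρ))).toReal = v₃ := by
      rw [hv₃def, Measure.addHaar_closedBall_center volume y,
        Measure.addHaar_closedBall_center volume x]
    have hbig : v₃ * c ≤ ∫ z in closedBall y (3*ρ), φseq j z := by
      refine le_trans ?_ hmean
      rw [hvoly]
      have : (0:ℝ) ≤ v₃ := ENNReal.toReal_nonneg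
      nlinarith
    -- compare with the ball around x
    have htsub : closedBall x ρ ⊆ closedBall y (3*ρ) := by
      intro z hz
      rw [mem_closedBall] at hz ⊢
      have := dist_triangle z x y
      have : dist x y ≤ 2*ρ := by rw [dist_comm]; exact hyx
      calc dist z y ≤ dist z x + dist x y := dist_triangle _ _ _
        _ ≤ 3*ρ := by linarith
    have := diff_bound (isCompact_closedBall y (3*ρ)) measurableSet_closedBall htsub
      (hInt j _ (hyballU.trans hbigU) (isCompact_closedBall _ _))
      (fun z hz => hM j z (hyballU hz)) hbig
    rw [hvoly] at this
    exact this
  -- S = U by connectedness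
  have hUS : ∀ x ∈ U, x ∈ S := by
    obtain ⟨x₀, hx₀U, hbb⟩ := hpt
    obtain ⟨b, hb⟩ := hbb
    have hb' : ∀ j, b ≤ φseq j x₀ := fun j => hb (Set.mem_range_self j)
    have hx₀S : x₀ ∈ S := by
      obtain ⟨ε, hε, hball⟩ := Metric.isOpen_iff.1 hU x₀ hx₀U
      have hBU : closedBall x₀ (ε/2) ⊆ U :=
        (closedBall_subset_ball (by linarith)).trans hball
      refine ⟨ε/2, by linarith, hBU, (volume (closedBall x₀ (ε/2))).toReal * b, fun j => ?_⟩
      refine le_trans ?_ (sub_mean (hsub j).2.2 hx₀U (by linarith) hBU)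
      exact mul_le_mul_of_nonneg_left (hb' j) ENNReal.toReal_nonneg
    intro x hxU
    by_contra hxS
    -- x ∈ U \ closure S
    have hxncl : x ∉ closure S := fun h => hxS (hSclosed x hxU h)
    set V : Set X := U \ closure S with hV
    have hVopen : IsOpen V := hU.sdiff isClosed_closure
    have hcover : U ⊆ S ∪ V := by
      intro z hz
      by_cases hzc : z ∈ closure S
      · exact Or.inl (hSclosed z hz hzc)
      · exact Or.inr ⟨hz, hzc⟩
    have h1 : (U ∩ S).Nonempty := ⟨x₀, hx₀U, hx₀S⟩
    have h2 : (U ∩ V).Nonempty := ⟨x, hxU, hxU, hxncl⟩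
    obtain ⟨z, hzU, hzS, hzV⟩ := hUc.isPreconnected S V hSopen hVopen hcover h1 h2
    exact hzV.2 (subset_closure hzS)
  -- now cover K by finitely many balls
  have hx : ∀ x : X, ∃ ρ C : ℝ, x ∈ K → (0 < ρ ∧ closedBall x ρ ⊆ U ∧
      ∀ j, C ≤ ∫ y in closedBall x ρ, φseq j y) := by
    intro x
    by_cases hxK : x ∈ K
    · obtain ⟨ρ, hρ, hBU, C, hC⟩ := hUS x (hKU hxK)
      exact ⟨ρ, C, fun _ => ⟨hρ, hBU, hC⟩⟩
    · exact ⟨1, 0, fun h => absurd h hxK⟩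
  choose ρf Cf hf using hx
  obtain ⟨t, ht, hcover⟩ := hK.elim_nhds_subcover (fun x => ball x (ρf x))
    (fun x hx => ball_mem_nhds x (hf x hx).1)
  set T : Set X := ⋃ x ∈ t, closedBall x (ρf x) with hT
  have hTc : IsCompact T := t.isCompact_biUnion (fun x _ => isCompact_closedBall _ _)
  have hTU : T ⊆ U := by
    refine Set.iUnion₂_subset fun x hx => (hf x (ht x hx)).2.1
  have hKT : K ⊆ T := by
    refine hcover.trans (Set.iUnion₂_mono fun x _ => ball_subset_closedBall)
  obtain ⟨M, hM⟩ := hbdd T hTU hTc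
  set Mp := max M 0 with hMp
  -- the nonnegative functions M⁺ - φ_j on T
  refine ⟨Mp * (volume K).toReal -
    ∑ x ∈ t, (Mp * (volume (closedBall x (ρf x))).toReal - Cf x), fun j => ?_⟩
  set g : X → ℝ := fun y => Mp - φseq j y with hg
  have hgnn : ∀ y ∈ T, 0 ≤ g y := fun y hy => by
    simp only [hg, sub_nonneg]; exact le_trans (hM j y hy) (le_max_left _ _)
  have hgint : IntegrableOn g T volume :=
    (integrableOn_const hTc.measure_lt_top.ne).sub (hInt j _ hTU hTc)
  have hTmeas : MeasurableSet T := hTc.measurableSet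
  -- ∫_K g ≤ ∫_T g
  have hKg : ∫ y in K, g y ≤ ∫ y in T, g y := by
    have hdiff : ∫ y in T \ K, g y = (∫ y in T, g y) - ∫ y in K, g y :=
      integral_diff hK.measurableSet hgint hKT
    have : 0 ≤ ∫ y in T \ K, g y := by
      refine setIntegral_nonneg (hTmeas.diff hK.measurableSet) (fun y hy => hgnn y hy.1)
    linarith
  -- ∫_T g ≤ ∑ ∫_{B} g  via lintegrals
  have hsumnn : ∀ x ∈ t, 0 ≤ ∫ y in closedBall x (ρf x), g y := by
    intro x hx
    refine setIntegral_nonneg measurableSet_closedBall (fun y hy => hgnn y ?_)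
    exact Set.mem_biUnion hx hy
  have hTg : ∫ y in T, g y ≤ ∑ x ∈ t, ∫ y in closedBall x (ρf x), g y := by
    rw [← ENNReal.ofReal_le_ofReal_iff (Finset.sum_nonneg hsumnn)]
    have h0 : ENNReal.ofReal (∫ y in T, g y) = ∫⁻ y in T, ENNReal.ofReal (g y) ∂volume := by
      refine ofReal_integral_eq_lintegral_ofReal hgint ?_
      exact (ae_restrict_mem hTmeas).mono hgnn
    have h1 : ∀ x ∈ t, ENNReal.ofReal (∫ y in closedBall x (ρf x), g y)
        = ∫⁻ y in closedBall x (ρf x), ENNReal.ofReal (g y) ∂volume := by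
      intro x hx
      refine ofReal_integral_eq_lintegral_ofReal
        (hgint.mono_set (Set.subset_biUnion_of_mem (u := fun x => closedBall x (ρf x)) hx)) ?_
      refine (ae_restrict_mem measurableSet_closedBall).mono
        (fun y hy => hgnn y (Set.mem_biUnion hx hy))
    rw [h0, ENNReal.ofReal_sum_of_nonneg hsumnn]
    calc ∫⁻ y in T, ENNReal.ofReal (g y) ∂volume
        ≤ ∑ x ∈ t, ∫⁻ y in closedBall x (ρf x), ENNReal.ofReal (g y) ∂volume :=
          lintegral_biUnion_finset_le _ t _
      _ = ∑ x ∈ t, ENNReal.ofReal (∫ y in closedBall x (ρf x), g y) := by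
          exact Finset.sum_congr rfl (fun x hx => (h1 x hx).symm)
  -- each ball term
  have hball : ∀ x ∈ t, ∫ y in closedBall x (ρf x), g y
      ≤ Mp * (volume (closedBall x (ρf x))).toReal - Cf x := by
    intro x hx
    have hint : IntegrableOn (φseq j) (closedBall x (ρf x)) volume :=
      hInt j _ (hf x (ht x hx)).2.1 (isCompact_closedBall _ _)
    rw [hg, integral_sub (integrableOn_const measure_closedBall_lt_top.ne :
      IntegrableOn (fun _ => Mp) (closedBall x (ρf x)) volume) hint,
      setIntegral_const, smul_eq_mul, mul_comm, measureReal_def]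
    have := (hf x (ht x hx)).2.2 j
    linarith
  -- conclude
  have hKgval : ∫ y in K, g y = Mp * (volume K).toReal - ∫ y in K, φseq j y := by
    rw [hg, integral_sub (integrableOn_const hK.measure_lt_top.ne : IntegrableOn (fun _ => Mp) K volume)
      (hInt j _ hKU hK), setIntegral_const, smul_eq_mul, mul_comm, measureReal_def]
  have hchain : ∫ y in K, g y ≤ ∑ x ∈ t, (Mp * (volume (closedBall x (ρf x))).toReal - Cf x) :=
    le_trans (le_trans hKg hTg) (Finset.sum_le_sum hball)
  rw [hKgval] at hchain
  linarith

end

theorem compactness_principle_subharmonic {n : ℕ}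
    (U : Set (EuclideanSpace ℝ (Fin n))) (hU : IsOpen U) (hUc : IsConnected U)
    (φseq : ℕ → EuclideanSpace ℝ (Fin n) → ℝ)
    (hsub : ∀ j, SubharmonicOn (φseq j) U)
    (hbdd : ∀ K : Set (EuclideanSpace ℝ (Fin n)), K ⊆ U → IsCompact K →
      ∃ M : ℝ, ∀ j, ∀ x ∈ K, φseq j x ≤ M)
    (φ : EuclideanSpace ℝ (Fin n) → ℝ)
    (hconv : ∀ᵐ x ∂(volume.restrict U),
      Filter.Tendsto (fun j => φseq j x) Filter.atTop (nhds (φ x))) :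
    ∀ K : Set (EuclideanSpace ℝ (Fin n)), K ⊆ U → IsCompact K →
      Filter.Tendsto (fun j => ∫ x in K, |φseq j x - φ x| ∂volume)
        Filter.atTop (nhds 0) := by
  classical
  intro K hKU hK
  rcases K.eq_empty_or_nonempty with hKe | hKne
  · subst hKe; simp only [Measure.restrict_empty, integral_zero_measure]
    exact tendsto_const_nhds
  have hInt : ∀ j, ∀ s : Set (EuclideanSpace ℝ (Fin n)), s ⊆ U → IsCompact s → IntegrableOn (φseq j) s volume :=
    fun j s hsU hs => (hsub j).2.1.integrableOn_compact_subset hsU hs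
  -- setup: thickenings
  obtain ⟨δ, hδ, hthick⟩ := hK.exists_thickening_subset_open hU hKU
  set r₀ : ℝ := δ/4 with hr₀def
  have hr₀ : 0 < r₀ := by positivity
  set K' : Set (EuclideanSpace ℝ (Fin n)) := cthickening (2*r₀) K with hK'def
  have hK'U : K' ⊆ U :=
    (cthickening_subset_thickening' hδ (by rw [hr₀def]; linarith) K).trans hthick
  have hK'c : IsCompact K' := hK.cthickening
  have hKK' : K ⊆ K' := self_subset_cthickening K
  have hK'meas : MeasurableSet K' := hK'c.measurableSet
  have hKmeas : MeasurableSet K := hK.measurableSet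
  obtain ⟨M, hM⟩ := hbdd K' hK'U hK'c
  -- a.e. facts on K'
  have hconv' : ∀ᵐ x ∂(volume.restrict K'),
      Tendsto (fun j => φseq j x) atTop (nhds (φ x)) :=
    ae_restrict_of_ae_restrict_of_subset hK'U hconv
  have hmem' : ∀ᵐ x ∂(volume.restrict K'), x ∈ K' := ae_restrict_mem hK'meas
  -- a good point for the lower bound lemma
  have hpt : ∃ x₀ ∈ U, BddBelow (Set.range fun j => φseq j x₀) := by
    have hUpos : volume U ≠ 0 := (hU.measure_pos volume hUc.nonempty).ne'
    have hres : (volume.restrict U) ≠ 0 := by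
      rw [← Measure.measure_univ_ne_zero, Measure.restrict_apply_univ]; exact hUpos
    haveI : (ae (volume.restrict U)).NeBot := ae_neBot.2 hres
    obtain ⟨x₀, h1, h2⟩ := (hconv.and (ae_restrict_mem hU.measurableSet)).exists
    exact ⟨x₀, h2, h1.bddBelow_range⟩
  obtain ⟨C, hC⟩ := lower_bound U hU hUc φseq hsub hbdd hpt hK'U hK'c
  -- integrability of φseq j and nonnegativity of M - φseq j on K'
  have hφjint : ∀ j, IntegrableOn (φseq j) K' volume := fun j => hInt j K' hK'U hK'c
  have hσjint : ∀ j, IntegrableOn (fun y => M - φseq j y) K' volume := fun j =>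
    (integrableOn_const hK'c.measure_lt_top.ne).sub (hφjint j)
  -- uniform bound on the lintegrals of M - φseq j over K'
  set Λ : ENNReal := ENNReal.ofReal (M * (volume K').toReal - C) with hΛdef
  have hΛfin : Λ ≠ ⊤ := ENNReal.ofReal_ne_top
  have hσval : ∀ j, ∫ y in K', (M - φseq j y) = M * (volume K').toReal - ∫ y in K', φseq j y := by
    intro j
    rw [integral_sub (integrableOn_const hK'c.measure_lt_top.ne : IntegrableOn (fun _ => M) K' volume) (hφjint j),
      setIntegral_const, smul_eq_mul, mul_comm, measureReal_def]
  have hΛ : ∀ j, ∫⁻ y in K', ENNReal.ofReal (M - φseq j y) ∂volume ≤ Λ := by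
    intro j
    rw [← ofReal_integral_eq_lintegral_ofReal (hσjint j)
      ((ae_restrict_mem hK'meas).mono (fun y hy => sub_nonneg.2 (hM j y hy)))]
    apply ENNReal.ofReal_le_ofReal
    rw [hσval j]
    linarith [hC j]
  -- measurable versions g j of ENNReal.ofReal (M - φseq j ·)
  have hGjaem : ∀ j, AEMeasurable (fun y => ENNReal.ofReal (M - φseq j y))
      (volume.restrict K') := fun j =>
    ENNReal.measurable_ofReal.comp_aemeasurable (((hσjint j).1).aemeasurable)
  set g : ℕ → (EuclideanSpace ℝ (Fin n)) → ENNReal := fun j => (hGjaem j).mk _ with hgdef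
  have hgmeas : ∀ j, Measurable (g j) := fun j => (hGjaem j).measurable_mk
  have hgae : ∀ j, (fun y => ENNReal.ofReal (M - φseq j y)) =ᵐ[volume.restrict K'] g j :=
    fun j => (hGjaem j).ae_eq_mk
  -- facts about φ
  have hφaesm : AEStronglyMeasurable φ (volume.restrict K') :=
    aestronglyMeasurable_of_tendsto_ae atTop (fun j => (hφjint j).1) hconv'
  have hφleM : ∀ᵐ x ∂(volume.restrict K'), φ x ≤ M := by
    filter_upwards [hconv', hmem'] with x h1 h2
    exact le_of_tendsto h1 (Eventually.of_forall fun j => hM j x h2)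
  have hGσtendsto : ∀ᵐ x ∂(volume.restrict K'),
      Tendsto (fun j => ENNReal.ofReal (M - φseq j x)) atTop
        (nhds (ENNReal.ofReal (M - φ x))) := by
    filter_upwards [hconv'] with x h1
    exact ENNReal.tendsto_ofReal (h1.const_sub M)
  have hGσaem : AEMeasurable (fun y => ENNReal.ofReal (M - φ y)) (volume.restrict K') :=
    ENNReal.measurable_ofReal.comp_aemeasurable
      ((aemeasurable_const.sub hφaesm.aemeasurable))
  have hGσle : ∫⁻ y in K', ENNReal.ofReal (M - φ y) ∂volume ≤ Λ := by
    have heq : (fun y => ENNReal.ofReal (M - φ y)) =ᵐ[volume.restrict K']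
        (fun y => liminf (fun j => ENNReal.ofReal (M - φseq j y)) atTop) := by
      filter_upwards [hGσtendsto] with x h1
      exact h1.liminf_eq.symm
    calc ∫⁻ y in K', ENNReal.ofReal (M - φ y) ∂volume
        = ∫⁻ y in K', liminf (fun j => ENNReal.ofReal (M - φseq j y)) atTop ∂volume :=
          lintegral_congr_ae heq
      _ ≤ liminf (fun j => ∫⁻ y in K', ENNReal.ofReal (M - φseq j y) ∂volume) atTop :=
          lintegral_liminf_le' (fun j => hGjaem j)
      _ ≤ liminf (fun _ => Λ) atTop := Filter.liminf_le_liminf (Eventually.of_forall hΛ)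
      _ = Λ := Filter.liminf_const Λ
  -- integrability of M - φ and φ on K'
  have hσφint : IntegrableOn (fun y => M - φ y) K' volume := by
    have h1 : Integrable (fun y => (ENNReal.ofReal (M - φ y)).toReal)
        (volume.restrict K') :=
      integrable_toReal_of_lintegral_ne_top hGσaem (lt_of_le_of_lt hGσle hΛfin.lt_top).ne
    refine h1.congr ?_
    filter_upwards [hφleM] with x h1
    rw [ENNReal.toReal_ofReal (by linarith)]
  have hφint : IntegrableOn φ K' volume := by
    have h2 := (integrableOn_const hK'c.measure_lt_top.ne :
      IntegrableOn (fun _ => M) K' volume).sub hσφint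
    refine h2.congr ?_
    refine Eventually.of_forall (fun y => by simp)
  -- the measurable density for M - φ and the associated measure
  set gσ0 : (EuclideanSpace ℝ (Fin n)) → ENNReal := hGσaem.mk _ with hgσ0def
  have hgσ0meas : Measurable gσ0 := hGσaem.measurable_mk
  have hgσ0ae : (fun y => ENNReal.ofReal (M - φ y)) =ᵐ[volume.restrict K'] gσ0 :=
    hGσaem.ae_eq_mk
  set gσ : (EuclideanSpace ℝ (Fin n)) → ENNReal := K'.indicator gσ0 with hgσdef
  have hgσmeas : Measurable gσ := hgσ0meas.indicator hK'meas
  set μσ : Measure (EuclideanSpace ℝ (Fin n)) := volume.withDensity gσ with hμσdef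
  have hμσ_apply : ∀ s : Set (EuclideanSpace ℝ (Fin n)), MeasurableSet s → s ⊆ K' →
      μσ s = ∫⁻ y in s, ENNReal.ofReal (M - φ y) ∂volume := by
    intro s hs hsK'
    rw [hμσdef, withDensity_apply _ hs]
    have h1 : ∫⁻ y in s, gσ y ∂volume = ∫⁻ y in s, gσ0 y ∂volume := by
      refine setLIntegral_congr_fun hs (fun y hy => ?_)
      exact Set.indicator_of_mem (hsK' hy) _
    rw [h1]
    exact (lintegral_congr_ae (ae_restrict_of_ae_restrict_of_subset hsK' hgσ0ae)).symm
  have hμσK'fin : μσ K' ≤ Λ := by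
    rw [hμσ_apply K' hK'meas subset_rfl]; exact hGσle
  -- the key estimate for every radius r ∈ (0, r₀]
  have key : ∀ r : ℝ, 0 < r → r ≤ r₀ →
      limsup (fun j => ENNReal.ofReal (∫ y in K, M - φseq j y)) atTop
        ≤ μσ (cthickening r K) := by
    intro r hr hrr₀
    set Kr : Set (EuclideanSpace ℝ (Fin n)) := cthickening r K with hKrdef
    have hKrK' : Kr ⊆ K' := cthickening_mono (by linarith) K
    have hKrmeas : MeasurableSet Kr := isClosed_cthickening.measurableSet
    have hKrc : IsCompact Kr := hK.cthickening
    have hball_sub : ∀ x ∈ Kr, closedBall x r ⊆ K' := by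
      intro x hx z hz
      rw [hK'def, mem_cthickening_iff]
      rw [hKrdef, mem_cthickening_iff] at hx
      calc EMetric.infEdist z K ≤ EMetric.infEdist x K + edist z x :=
            EMetric.infEdist_le_infEdist_add_edist
        _ ≤ ENNReal.ofReal r + ENNReal.ofReal r := by
            refine add_le_add hx ?_
            rw [edist_dist]
            exact ENNReal.ofReal_le_ofReal (mem_closedBall.1 hz)
        _ = ENNReal.ofReal (r + r) := (ENNReal.ofReal_add hr.le hr.le).symm
        _ ≤ ENNReal.ofReal (2*r₀) := ENNReal.ofReal_le_ofReal (by linarith)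
    -- ball volume
    set c : ENNReal := volume (closedBall (0 : (EuclideanSpace ℝ (Fin n))) r) with hcdef
    have hc0 : c ≠ 0 := (measure_closedBall_pos volume _ hr).ne'
    have hcT : c ≠ ⊤ := measure_closedBall_lt_top.ne
    have hcball : ∀ x : (EuclideanSpace ℝ (Fin n)), volume (closedBall x r) = c := fun x =>
      Measure.addHaar_closedBall_center volume x r
    -- measurability of the kernel
    have hFmeas : ∀ j, Measurable (Function.uncurry fun x y =>
        (closedBall x r).indicator (g j) y) := by
      intro j
      have hD : MeasurableSet {p : (EuclideanSpace ℝ (Fin n)) × (EuclideanSpace ℝ (Fin n)) | dist p.2 p.1 ≤ r} :=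
        (isClosed_le (continuous_dist.comp (continuous_snd.prodMk continuous_fst))
          continuous_const).measurableSet
      have heq : (Function.uncurry fun x y => (closedBall x r).indicator (g j) y)
          = {p : (EuclideanSpace ℝ (Fin n)) × (EuclideanSpace ℝ (Fin n)) | dist p.2 p.1 ≤ r}.indicator (fun p => g j p.2) := by
        funext p
        simp only [Function.uncurry, Set.indicator_apply, mem_closedBall, Set.mem_setOf_eq]
      rw [heq]
      exact ((hgmeas j).comp measurable_snd).indicator hD
    have hIndmeas : ∀ j, Measurable fun x => ∫⁻ y, (closedBall x r).indicator (g j) y ∂volume :=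
      fun j => Measurable.lintegral_prod_right (hFmeas j)
    have hIndeq : ∀ j, ∀ x : (EuclideanSpace ℝ (Fin n)), ∫⁻ y, (closedBall x r).indicator (g j) y ∂volume
        = ∫⁻ y in closedBall x r, g j y ∂volume := by
      intro j x
      rw [lintegral_indicator measurableSet_closedBall _]
    -- H j x = c⁻¹ ∫⁻_{B(x,r)} g j
    set H : ℕ → (EuclideanSpace ℝ (Fin n)) → ENNReal := fun j x => c⁻¹ * ∫⁻ y in closedBall x r, g j y ∂volume
      with hHdef
    have hHmeas : ∀ j, Measurable (H j) := by
      intro j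
      apply Measurable.const_mul
      have : (fun x => ∫⁻ y in closedBall x r, g j y ∂volume)
          = fun x => ∫⁻ y, (closedBall x r).indicator (g j) y ∂volume :=
        funext fun x => (hIndeq j x).symm
      rw [this]; exact hIndmeas j
    -- Tonelli
    have tonelli : ∀ j, (∫⁻ y in K, g j y ∂volume) * c
        ≤ ∫⁻ x in Kr, (∫⁻ y in closedBall x r, g j y ∂volume) ∂volume := by
      intro j
      have hswap : ∫⁻ x in Kr, (∫⁻ y, (closedBall x r).indicator (g j) y ∂volume) ∂volume
          = ∫⁻ y, (∫⁻ x in Kr, (closedBall x r).indicator (g j) y ∂volume) ∂volume :=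
        lintegral_lintegral_swap (hFmeas j).aemeasurable
      have hinner : ∀ y : (EuclideanSpace ℝ (Fin n)), ∫⁻ x in Kr, (closedBall x r).indicator (g j) y ∂volume
          = g j y * volume (closedBall y r ∩ Kr) := by
        intro y
        have heq2 : (fun x => (closedBall x r).indicator (g j) y)
            = (closedBall y r).indicator (fun _ => g j y) := by
          funext x
          simp only [Set.indicator_apply, mem_closedBall, dist_comm]
        rw [heq2, lintegral_indicator_const measurableSet_closedBall,
          Measure.restrict_apply measurableSet_closedBall]
      have hlow : ∫⁻ y, K.indicator (fun y => g j y * c) y ∂volume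
          ≤ ∫⁻ y, g j y * volume (closedBall y r ∩ Kr) ∂volume := by
        refine lintegral_mono fun y => ?_
        by_cases hy : y ∈ K
        · rw [Set.indicator_of_mem hy]
          have hsub2 : closedBall y r ⊆ Kr := closedBall_subset_cthickening hy r
          rw [Set.inter_eq_self_of_subset_left hsub2, hcball y]
        · rw [Set.indicator_of_notMem hy]; exact zero_le
      have hindK : ∫⁻ y, K.indicator (fun y => g j y * c) y ∂volume
          = (∫⁻ y in K, g j y ∂volume) * c := by
        rw [lintegral_indicator hKmeas _, lintegral_mul_const c (hgmeas j)]
      calc (∫⁻ y in K, g j y ∂volume) * c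
          = ∫⁻ y, K.indicator (fun y => g j y * c) y ∂volume := hindK.symm
        _ ≤ ∫⁻ y, g j y * volume (closedBall y r ∩ Kr) ∂volume := hlow
        _ = ∫⁻ y, (∫⁻ x in Kr, (closedBall x r).indicator (g j) y ∂volume) ∂volume := by
            exact lintegral_congr fun y => (hinner y).symm
        _ = ∫⁻ x in Kr, (∫⁻ y, (closedBall x r).indicator (g j) y ∂volume) ∂volume :=
            hswap.symm
        _ = ∫⁻ x in Kr, (∫⁻ y in closedBall x r, g j y ∂volume) ∂volume := by
            exact lintegral_congr fun x => hIndeq j x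
    have hLle : ∀ j, ∫⁻ y in K, g j y ∂volume ≤ ∫⁻ x in Kr, H j x ∂volume := by
      intro j
      have h1 : ∫⁻ x in Kr, H j x ∂volume
          = c⁻¹ * ∫⁻ x in Kr, (∫⁻ y in closedBall x r, g j y ∂volume) ∂volume := by
        rw [hHdef]
        have hm : Measurable fun x => ∫⁻ y in closedBall x r, g j y ∂volume := by
          have : (fun x => ∫⁻ y in closedBall x r, g j y ∂volume)
              = fun x => ∫⁻ y, (closedBall x r).indicator (g j) y ∂volume :=
            funext fun x => (hIndeq j x).symm
          rw [this]; exact hIndmeas j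
        exact lintegral_const_mul c⁻¹ hm
      rw [h1]
      have t := tonelli j
      rw [← ENNReal.le_div_iff_mul_le (Or.inl hc0) (Or.inl hcT)] at t
      refine le_trans t ?_
      rw [ENNReal.div_eq_inv_mul]
    -- uniform bound for H j on Kr
    have hHbound : ∀ j, H j ≤ᵐ[volume.restrict Kr] fun _ => c⁻¹ * Λ := by
      intro j
      filter_upwards [ae_restrict_mem hKrmeas] with x hx
      refine mul_le_mul_right ?_ c⁻¹
      have he : ∫⁻ y in closedBall x r, g j y ∂volume
          = ∫⁻ y in closedBall x r, ENNReal.ofReal (M - φseq j y) ∂volume :=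
        (lintegral_congr_ae (ae_restrict_of_ae_restrict_of_subset (hball_sub x hx)
          (hgae j))).symm
      rw [he]
      exact le_trans (lintegral_mono_set (hball_sub x hx)) (hΛ j)
    have hboundfin : ∫⁻ _ in Kr, (c⁻¹ * Λ) ∂volume ≠ ⊤ := by
      rw [setLIntegral_const]
      exact (ENNReal.mul_lt_top (ENNReal.mul_lt_top
        (ENNReal.inv_lt_top.2 (pos_iff_ne_zero.2 hc0)) hΛfin.lt_top)
        hKrc.measure_lt_top).ne
    -- pointwise limsup bound
    have hHlimsup : ∀ᵐ x ∂(volume.restrict Kr),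
        limsup (fun j => H j x) atTop ≤ ENNReal.ofReal (M - φ x) := by
      filter_upwards [ae_restrict_mem hKrmeas,
        ae_restrict_of_ae_restrict_of_subset hKrK' hGσtendsto] with x hx htd
      have hxU : x ∈ U := hK'U (hKrK' hx)
      have hptw : ∀ j, H j x ≤ ENNReal.ofReal (M - φseq j x) := by
        intro j
        have hballK' : closedBall x r ⊆ K' := hball_sub x hx
        have hσjball : IntegrableOn (fun y => M - φseq j y) (closedBall x r) volume :=
          (hσjint j).mono_set hballK'
        have he : ∫⁻ y in closedBall x r, g j y ∂volume
            = ENNReal.ofReal (∫ y in closedBall x r, (M - φseq j y)) := by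
          rw [ofReal_integral_eq_lintegral_ofReal hσjball
            ((ae_restrict_mem measurableSet_closedBall).mono
              (fun y hy => sub_nonneg.2 (hM j y (hballK' hy))))]
          exact (lintegral_congr_ae (ae_restrict_of_ae_restrict_of_subset hballK'
            (hgae j))).symm
        have hmean : ∫ y in closedBall x r, (M - φseq j y)
            ≤ (volume (closedBall x r)).toReal * (M - φseq j x) := by
          have h2 := sub_mean (hsub j).2.2 hxU hr (hballK'.trans hK'U)
          have h3 : ∫ y in closedBall x r, (M - φseq j y)
              = M * (volume (closedBall x r)).toReal - ∫ y in closedBall x r, φseq j y := by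
            rw [integral_sub (integrableOn_const measure_closedBall_lt_top.ne :
              IntegrableOn (fun _ => M) (closedBall x r) volume)
              ((hφjint j).mono_set hballK'), setIntegral_const, smul_eq_mul, mul_comm, measureReal_def]
          rw [h3]; ring_nf; nlinarith [h2]
        calc H j x = c⁻¹ * ∫⁻ y in closedBall x r, g j y ∂volume := rfl
          _ ≤ c⁻¹ * ENNReal.ofReal ((volume (closedBall x r)).toReal * (M - φseq j x)) := by
              rw [he]; exact mul_le_mul_right (ENNReal.ofReal_le_ofReal hmean) c⁻¹
          _ = c⁻¹ * (c * ENNReal.ofReal (M - φseq j x)) := by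
              rw [ENNReal.ofReal_mul ENNReal.toReal_nonneg, ENNReal.ofReal_toReal
                (by rw [hcball x]; exact hcT), hcball x]
          _ = ENNReal.ofReal (M - φseq j x) := by
              rw [← mul_assoc, ENNReal.inv_mul_cancel hc0 hcT, one_mul]
      calc limsup (fun j => H j x) atTop
          ≤ limsup (fun j => ENNReal.ofReal (M - φseq j x)) atTop :=
            Filter.limsup_le_limsup (Eventually.of_forall hptw)
        _ = ENNReal.ofReal (M - φ x) := htd.limsup_eq
    -- put it together
    have hLrepr : ∀ j, ENNReal.ofReal (∫ y in K, M - φseq j y)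
        = ∫⁻ y in K, g j y ∂volume := by
      intro j
      rw [ofReal_integral_eq_lintegral_ofReal ((hσjint j).mono_set hKK')
        ((ae_restrict_mem hKmeas).mono (fun y hy => sub_nonneg.2 (hM j y (hKK' hy))))]
      exact lintegral_congr_ae (ae_restrict_of_ae_restrict_of_subset hKK' (hgae j))
    calc limsup (fun j => ENNReal.ofReal (∫ y in K, M - φseq j y)) atTop
        = limsup (fun j => ∫⁻ y in K, g j y ∂volume) atTop := by
          congr 1; exact funext hLrepr
      _ ≤ limsup (fun j => ∫⁻ x in Kr, H j x ∂volume) atTop :=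
          Filter.limsup_le_limsup (Eventually.of_forall hLle)
      _ ≤ ∫⁻ x in Kr, limsup (fun j => H j x) atTop ∂volume :=
          limsup_lintegral_le _ hHmeas hHbound hboundfin
      _ ≤ ∫⁻ x in Kr, ENNReal.ofReal (M - φ x) ∂volume := lintegral_mono_ae hHlimsup
      _ = μσ Kr := (hμσ_apply Kr hKrmeas hKrK').symm
  -- pass to the limit r → 0
  have hμσKfin : μσ K ≠ ⊤ :=
    (lt_of_le_of_lt (le_trans (measure_mono hKK') hμσK'fin) hΛfin.lt_top).ne
  have hφleMK : ∀ᵐ y ∂(volume.restrict K), φ y ≤ M :=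
    ae_restrict_of_ae_restrict_of_subset hKK' hφleM
  have hσφintK : IntegrableOn (fun y => M - φ y) K volume := hσφint.mono_set hKK'
  have hμσK : μσ K = ENNReal.ofReal (∫ y in K, M - φ y) := by
    rw [hμσ_apply K hKmeas hKK',
      ← ofReal_integral_eq_lintegral_ofReal hσφintK
        (hφleMK.mono fun y hy => sub_nonneg.2 hy)]
  have hlimsup : limsup (fun j => ENNReal.ofReal (∫ y in K, M - φseq j y)) atTop ≤ μσ K := by
    set s : ℕ → Set (EuclideanSpace ℝ (Fin n)) := fun m => cthickening (min r₀ (1/(m+1))) K with hsdef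
    have h1 : ∀ m : ℕ, limsup (fun j => ENNReal.ofReal (∫ y in K, M - φseq j y)) atTop
        ≤ μσ (s m) := fun m =>
      key _ (lt_min hr₀ (by positivity)) (min_le_left _ _)
    have hanti : Antitone s := by
      intro m m' hmm'
      apply cthickening_mono
      apply min_le_min le_rfl
      apply one_div_le_one_div_of_le (by positivity)
      exact_mod_cast add_le_add_left (Nat.cast_le.2 hmm') 1
    have hiInter : ⋂ m, s m = K := by
      apply subset_antisymm
      · intro x hx
        have hmem : ∀ m : ℕ, EMetric.infEdist x K ≤ ENNReal.ofReal (min r₀ (1/(m+1))) :=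
          fun m => mem_cthickening_iff.1 (Set.mem_iInter.1 hx m)
        have htend : Tendsto (fun m : ℕ => ENNReal.ofReal (min r₀ (1/(m+1)))) atTop
            (nhds 0) := by
          have h2 : Tendsto (fun m : ℕ => min r₀ (1/(m+1:ℝ))) atTop (nhds (min r₀ 0)) :=
            tendsto_const_nhds.min tendsto_one_div_add_atTop_nhds_zero_nat
          rw [min_eq_right hr₀.le] at h2
          simpa using ENNReal.tendsto_ofReal h2
        have h0 : EMetric.infEdist x K = 0 :=
          le_antisymm (ge_of_tendsto htend (Eventually.of_forall hmem)) (zero_le)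
        have := EMetric.mem_closure_iff_infEdist_zero.2 h0
        rwa [hK.isClosed.closure_eq] at this
      · exact Set.subset_iInter fun m => self_subset_cthickening K
    have h2 : Tendsto (fun m => μσ (s m)) atTop (nhds (μσ (⋂ m, s m))) := by
      refine tendsto_measure_iInter_atTop
        (fun m => isClosed_cthickening.measurableSet.nullMeasurableSet) hanti ⟨0, ?_⟩
      refine (lt_of_le_of_lt (le_trans (measure_mono ?_) hμσK'fin) hΛfin.lt_top).ne
      exact cthickening_mono (le_trans (min_le_left _ _) (by linarith)) K
    rw [hiInter] at h2
    exact ge_of_tendsto h2 (Eventually.of_forall h1)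
  -- dominated convergence for the positive parts
  have hφintK : IntegrableOn φ K volume := hφint.mono_set hKK'
  have hφjintK : ∀ j, IntegrableOn (φseq j) K volume := fun j => (hφjint j).mono_set hKK'
  have hconvK : ∀ᵐ x ∂(volume.restrict K),
      Tendsto (fun j => φseq j x) atTop (nhds (φ x)) :=
    ae_restrict_of_ae_restrict_of_subset hKK' hconv'
  have hT2 : Tendsto (fun j => ∫ y in K, max (φseq j y - φ y) 0) atTop (nhds 0) := by
    have hdct := tendsto_integral_of_dominated_convergence (μ := volume.restrict K)
      (F := fun j y => max (φseq j y - φ y) 0) (f := fun _ => (0:ℝ))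
      (bound := fun y => M - φ y)
      (fun j => ((hφjintK j).1.sub hφintK.1).sup aestronglyMeasurable_const)
      hσφintK ?_ ?_
    · simpa using hdct
    · intro j
      filter_upwards [ae_restrict_mem hKmeas, hφleMK] with y hy hyM
      rw [Real.norm_eq_abs, abs_of_nonneg (le_max_right _ _)]
      exact max_le (by linarith [hM j y (hKK' hy)]) (by linarith)
    · filter_upwards [hconvK] with y hy
      have h3 : Tendsto (fun j => max (φseq j y - φ y) 0) atTop
          (nhds (max (φ y - φ y) 0)) :=
        (hy.sub tendsto_const_nhds).max tendsto_const_nhds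
      simpa using h3
  -- final assembly
  rw [Metric.tendsto_atTop]
  intro ε hε
  have e1 : ∀ᶠ j in atTop, ∫ y in K, max (φseq j y - φ y) 0 < ε/4 :=
    hT2.eventually_lt_const (by positivity)
  have e2 : ∀ᶠ j in atTop, ENNReal.ofReal (∫ y in K, M - φseq j y)
      < μσ K + ENNReal.ofReal (ε/4) := by
    have hlt : limsup (fun j => ENNReal.ofReal (∫ y in K, M - φseq j y)) atTop
        < μσ K + ENNReal.ofReal (ε/4) :=
      lt_of_le_of_lt hlimsup
        (ENNReal.lt_add_right hμσKfin (ENNReal.ofReal_pos.2 (by positivity)).ne')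
    exact Filter.eventually_lt_of_limsup_lt hlt
      (Filter.isBoundedUnder_of ⟨⊤, fun _ => le_top⟩)
  obtain ⟨N, hN⟩ := eventually_atTop.1 (e1.and e2)
  refine ⟨N, fun j hj => ?_⟩
  obtain ⟨h1, h2⟩ := hN j hj
  have hσnn : 0 ≤ ∫ y in K, M - φ y :=
    integral_nonneg_of_ae (hφleMK.mono fun y hy => sub_nonneg.2 hy)
  have hσjK : ∫ y in K, (M - φseq j y) ≤ (∫ y in K, M - φ y) + ε/4 := by
    have h3 := h2.le
    rw [hμσK, ← ENNReal.ofReal_add hσnn (by positivity)] at h3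
    exact (ENNReal.ofReal_le_ofReal_iff (by positivity)).1 h3
  have hmaxint : IntegrableOn (fun y => max (φseq j y - φ y) 0) K volume :=
    ((hφjintK j).sub hφintK).pos_part
  have hid : ∫ y in K, |φseq j y - φ y|
      = ((∫ y in K, (M - φseq j y)) - ∫ y in K, (M - φ y))
        + 2 * ∫ y in K, max (φseq j y - φ y) 0 := by
    have hptw : ∀ y, |φseq j y - φ y|
        = ((M - φseq j y) - (M - φ y)) + 2 * max (φseq j y - φ y) 0 := by
      intro y; rcases le_total 0 (φseq j y - φ y) with h | h
      · rw [abs_of_nonneg h, max_eq_left h]; ring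
      · rw [abs_of_nonpos h, max_eq_right h]; ring
    calc ∫ y in K, |φseq j y - φ y|
        = ∫ y in K, (((M - φseq j y) - (M - φ y)) + 2 * max (φseq j y - φ y) 0) :=
          integral_congr_ae (Eventually.of_forall fun y => hptw y)
      _ = (∫ y in K, ((M - φseq j y) - (M - φ y)))
          + ∫ y in K, 2 * max (φseq j y - φ y) 0 := by
          exact integral_add (((hσjint j).mono_set hKK').sub hσφintK) (hmaxint.const_mul 2)
      _ = ((∫ y in K, (M - φseq j y)) - ∫ y in K, (M - φ y))
          + 2 * ∫ y in K, max (φseq j y - φ y) 0 := by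
          rw [integral_sub ((hσjint j).mono_set hKK') hσφintK, integral_const_mul]
  have hnn2 : 0 ≤ ∫ y in K, |φseq j y - φ y| :=
    integral_nonneg fun y => abs_nonneg _
  have hmaxnn : 0 ≤ ∫ y in K, max (φseq j y - φ y) 0 :=
    integral_nonneg fun y => le_max_right _ _
  rw [Real.dist_eq, sub_zero, abs_of_nonneg hnn2, hid]
  linarith
end

section
/- Let f be a holomorphic self-map of the unit disc 𝔻 that is not injective and not an elliptic automorphism. If there exists a point c ∈ 𝔻 and a subsequence (n_k) with f^{n_k}(c) → c and moreover dist(f^{n_k}(c), c) ≤ exp(−ε·d^{n_k}) for some ε > 0 and d > 1, then c is an attracting fixed point of f (i.e. f(c) = c and |f'(c)| < 1). -/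
open Metric Filter Set Complex
open scoped NNReal ENNReal Topology
set_option maxHeartbeats 1000000

lemma my_montel (s ρ : ℝ) (hs0 : 0 ≤ s) (hsρ : s < ρ) (hρ1 : ρ < 1) (hρ0 : 0 < ρ)
    (g : ℕ → ℂ → ℂ)
    (hd : ∀ k, DifferentiableOn ℂ (g k) (ball (0:ℂ) 1))
    (hb : ∀ k, Set.MapsTo (g k) (ball (0:ℂ) 1) (ball (0:ℂ) 1)) :
    ∃ σ : ℕ → ℕ, StrictMono σ ∧ ∃ h : ℂ → ℂ,
      TendstoUniformlyOn (fun k => g (σ k)) h atTop (closedBall 0 s) := by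
  set R : ℝ≥0 := ρ.toNNReal with hRdef
  have hR : (R : ℝ) = ρ := Real.coe_toNNReal _ hρ0.le
  have hR0 : (0 : ℝ≥0) < R := by
    rw [← NNReal.coe_lt_coe, hR]; exact hρ0
  have hsub : closedBall (0:ℂ) ρ ⊆ ball (0:ℂ) 1 := closedBall_subset_ball hρ1
  have hp : ∀ k, HasFPowerSeriesOnBall (g k) (cauchyPowerSeries (g k) 0 ρ) 0 (R : ℝ≥0∞) := by
    intro k
    have := ((hd k).mono (by rw [hR]; exact hsub)).hasFPowerSeriesOnBall (c := 0) hR0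
    rwa [hR] at this
  -- bound on coefficients
  have hcoef : ∀ k n, ‖(cauchyPowerSeries (g k) 0 ρ).coeff n‖ ≤ ρ⁻¹ ^ n := by
    intro k n
    have h1 := norm_cauchyPowerSeries_le (g k) 0 ρ n
    have hmem : ∀ θ : ℝ, circleMap 0 ρ θ ∈ ball (0:ℂ) 1 := by
      intro θ
      rw [mem_ball_zero_iff]
      simp only [norm_circleMap_zero, abs_of_pos hρ0]
      exact hρ1
    have hcont : ContinuousOn (fun θ : ℝ => ‖g k (circleMap 0 ρ θ)‖) (Set.uIcc 0 (2*Real.pi)) := by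
      apply ContinuousOn.norm
      exact ((hd k).continuousOn.comp (continuous_circleMap 0 ρ).continuousOn)
        (fun θ _ => hmem θ)
    have hval : ∀ θ : ℝ, θ ∈ Set.Icc 0 (2*Real.pi) → ‖g k (circleMap 0 ρ θ)‖ ≤ 1 := by
      intro θ _
      have := hb k (hmem θ)
      rw [mem_ball_zero_iff] at this
      exact this.le
    have hInt : (∫ θ in (0:ℝ)..2*Real.pi, ‖g k (circleMap 0 ρ θ)‖) ≤ 2*Real.pi := by
      have h2 := intervalIntegral.integral_mono_on (μ := MeasureTheory.volume)
        (f := fun θ : ℝ => ‖g k (circleMap 0 ρ θ)‖)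
        (g := fun _ : ℝ => (1:ℝ)) (by positivity)
        (hcont.intervalIntegrable) (intervalIntegrable_const) hval
      simpa using h2
    have h2 : ((2*Real.pi)⁻¹ * ∫ θ in (0:ℝ)..2*Real.pi, ‖g k (circleMap 0 ρ θ)‖) * |ρ|⁻¹ ^ n
        ≤ ρ⁻¹ ^ n := by
      have hπ : (0:ℝ) < 2*Real.pi := by positivity
      have hle1 : (2*Real.pi)⁻¹ * (∫ θ in (0:ℝ)..2*Real.pi, ‖g k (circleMap 0 ρ θ)‖) ≤ 1 := by
        rw [inv_mul_le_iff₀ hπ, mul_one]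
        exact hInt
      have hnn : (0:ℝ) ≤ |ρ|⁻¹ ^ n := by positivity
      calc ((2*Real.pi)⁻¹ * ∫ θ in (0:ℝ)..2*Real.pi, ‖g k (circleMap 0 ρ θ)‖) * |ρ|⁻¹ ^ n
          ≤ 1 * |ρ|⁻¹ ^ n := mul_le_mul_of_nonneg_right hle1 hnn
        _ = ρ⁻¹ ^ n := by rw [one_mul, abs_of_pos hρ0]
    calc ‖(cauchyPowerSeries (g k) 0 ρ).coeff n‖
        = ‖cauchyPowerSeries (g k) 0 ρ n‖ :=
          (FormalMultilinearSeries.norm_apply_eq_norm_coef).symm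
      _ ≤ _ := h1
      _ ≤ ρ⁻¹ ^ n := h2
  -- compactness of the coefficient space
  set A : ℕ → (ℕ → ℂ) := fun k j => (cauchyPowerSeries (g k) 0 ρ).coeff j with hA
  have hS : IsCompact (Set.pi Set.univ (fun j : ℕ => closedBall (0:ℂ) (ρ⁻¹ ^ j))) :=
    isCompact_univ_pi (fun j => isCompact_closedBall _ _)
  have hAS : ∀ k, A k ∈ Set.pi Set.univ (fun j : ℕ => closedBall (0:ℂ) (ρ⁻¹ ^ j)) := by
    intro k
    rw [Set.mem_univ_pi]
    intro j
    rw [mem_closedBall_zero_iff]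
    exact hcoef k j
  obtain ⟨aa, haS, σ, hσmono, hσtend⟩ := hS.tendsto_subseq hAS
  have hcoord : ∀ j, Tendsto (fun k => A (σ k) j) atTop (𝓝 (aa j)) := fun j =>
    (tendsto_pi_nhds.mp hσtend) j
  have haBound : ∀ j, ‖aa j‖ ≤ ρ⁻¹ ^ j := by
    intro j
    have := haS j (Set.mem_univ j)
    rwa [mem_closedBall_zero_iff] at this
  -- the limit function
  refine ⟨σ, hσmono, fun z => ∑' j, z ^ j • aa j, ?_⟩
  have hsρ' : s * ρ⁻¹ < 1 := by
    rw [← div_eq_mul_inv, div_lt_one hρ0]; exact hsρ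
  have hgeom : Summable (fun j : ℕ => (s * ρ⁻¹) ^ j) :=
    summable_geometric_of_lt_one (by positivity) hsρ'
  have hsummand : ∀ z : ℂ, z ∈ closedBall (0:ℂ) s →
      ∀ (b : ℕ → ℂ), (∀ j, ‖b j‖ ≤ ρ⁻¹ ^ j) → ∀ j : ℕ, ‖z ^ j • b j‖ ≤ (s * ρ⁻¹) ^ j := by
    intro z hz b hbb j
    rw [mem_closedBall_zero_iff] at hz
    rw [norm_smul, norm_pow, mul_pow]
    exact mul_le_mul (pow_le_pow_left₀ (norm_nonneg z) hz j) (hbb j) (norm_nonneg _) (by positivity)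
  have hsum_h : ∀ z : ℂ, z ∈ closedBall (0:ℂ) s →
      HasSum (fun j => z ^ j • aa j) (∑' j, z ^ j • aa j) := by
    intro z hz
    exact (Summable.of_norm_bounded hgeom (hsummand z hz aa haBound)).hasSum
  -- HasSum for each g k at z
  have hsum_g : ∀ k, ∀ z : ℂ, z ∈ closedBall (0:ℂ) s →
      HasSum (fun j => z ^ j • A k j) (g k z) := by
    intro k z hz
    rw [mem_closedBall_zero_iff] at hz
    have hzball : z ∈ Metric.eball (0:ℂ) (R : ℝ≥0∞) := by
      rw [Metric.emetric_ball_nnreal, mem_ball_zero_iff, hR]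
      exact lt_of_le_of_lt hz hsρ
    have hh := (hp k).hasSum hzball
    rw [zero_add] at hh
    have : (fun j => cauchyPowerSeries (g k) 0 ρ j fun _ => z) = fun j => z ^ j • A k j := by
      funext j
      rw [FormalMultilinearSeries.apply_eq_pow_smul_coeff]
    rwa [this] at hh
  -- the error bound
  set T : ℕ → ℝ := fun k => ∑' j, ‖A (σ k) j - aa j‖ * s ^ j with hT
  have hTbound : ∀ k, ∀ z ∈ closedBall (0:ℂ) s, ‖g (σ k) z - (∑' j, z ^ j • aa j)‖ ≤ T k := by
    intro k z hz
    have h1 := (hsum_g (σ k) z hz).sub (hsum_h z hz)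
    have h2 : (fun j => z ^ j • A (σ k) j - z ^ j • aa j) = fun j => z ^ j • (A (σ k) j - aa j) := by
      funext j; rw [smul_sub]
    rw [h2] at h1
    have hnormsum : Summable (fun j => ‖z ^ j • (A (σ k) j - aa j)‖) := by
      apply Summable.of_nonneg_of_le (fun j => norm_nonneg _)
        (fun j => ?_) (hgeom.mul_left 2)
      rw [norm_smul, norm_pow]
      have hz' := mem_closedBall_zero_iff.mp hz
      calc ‖z‖ ^ j * ‖A (σ k) j - aa j‖ ≤ s ^ j * (ρ⁻¹ ^ j + ρ⁻¹ ^ j) := by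
            apply mul_le_mul (pow_le_pow_left₀ (norm_nonneg z) hz' j)
              ((norm_sub_le _ _).trans (add_le_add (hcoef (σ k) j) (haBound j)))
              (norm_nonneg _) (by positivity)
        _ = 2 * (s * ρ⁻¹) ^ j := by ring
    rw [← h1.tsum_eq]
    refine (norm_tsum_le_tsum_norm hnormsum).trans ?_
    apply Summable.tsum_le_tsum _ hnormsum
    · apply Summable.of_nonneg_of_le (fun j => by positivity) (fun j => ?_) (hgeom.mul_left 2)
      have : ‖A (σ k) j - aa j‖ ≤ 2 * ρ⁻¹ ^ j := by
        refine (norm_sub_le _ _).trans ?_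
        have := hcoef (σ k) j; have := haBound j; linarith
      calc ‖A (σ k) j - aa j‖ * s ^ j ≤ 2 * ρ⁻¹ ^ j * s ^ j := by
            apply mul_le_mul_of_nonneg_right this (by positivity)
        _ = 2 * (s * ρ⁻¹) ^ j := by ring
    · intro j
      rw [norm_smul, norm_pow, mul_comm]
      apply mul_le_mul_of_nonneg_left _ (norm_nonneg _)
      exact pow_le_pow_left₀ (norm_nonneg z) (mem_closedBall_zero_iff.mp hz) j
  have hTtend : Tendsto T atTop (𝓝 0) := by
    have h0 : (0:ℝ) = ∑' _ : ℕ, (0:ℝ) := by simp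
    rw [hT, h0]
    apply tendsto_tsum_of_dominated_convergence (bound := fun j => 2 * (s * ρ⁻¹) ^ j)
      (hgeom.mul_left 2)
    · intro j
      have h1 : Tendsto (fun k => A (σ k) j - aa j) atTop (𝓝 0) := by
        have := (hcoord j).sub (tendsto_const_nhds (x := aa j))
        simpa using this
      have h2 : Tendsto (fun k => ‖A (σ k) j - aa j‖) atTop (𝓝 0) := by
        simpa using h1.norm
      have := h2.mul_const (s ^ j)
      simpa using this
    · filter_upwards with k j
      rw [Real.norm_of_nonneg (by positivity : (0:ℝ) ≤ ‖A (σ k) j - aa j‖ * s ^ j)]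
      have : ‖A (σ k) j - aa j‖ ≤ 2 * ρ⁻¹ ^ j := by
        refine (norm_sub_le _ _).trans ?_
        have := hcoef (σ k) j; have := haBound j; linarith
      calc ‖A (σ k) j - aa j‖ * s ^ j ≤ 2 * ρ⁻¹ ^ j * s ^ j :=
            mul_le_mul_of_nonneg_right this (by positivity)
        _ = 2 * (s * ρ⁻¹) ^ j := by ring
  -- conclude uniform convergence
  rw [Metric.tendstoUniformlyOn_iff]
  intro ε hε
  filter_upwards [hTtend.eventually (gt_mem_nhds hε)] with k hk z hz
  rw [dist_comm, dist_eq_norm]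
  exact lt_of_le_of_lt (hTbound k z hz) hk

/-- `f` is an elliptic automorphism of the open unit disc: a holomorphic
bijection of the disc onto itself with a fixed point inside the disc. -/
def IsEllipticAutomorphism (f : ℂ → ℂ) : Prop :=
  Set.BijOn f (ball (0 : ℂ) 1) (ball (0 : ℂ) 1) ∧ ∃ z ∈ ball (0 : ℂ) 1, f z = z

lemma my_iterate_diff {f : ℂ → ℂ} (hf : DifferentiableOn ℂ f (ball (0:ℂ) 1))
    (hm : Set.MapsTo f (ball (0:ℂ) 1) (ball (0:ℂ) 1)) :
    ∀ n, DifferentiableOn ℂ (f^[n]) (ball (0:ℂ) 1) := by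
  intro n
  induction n with
  | zero => simpa using differentiableOn_id
  | succ n ih =>
      rw [Function.iterate_succ']
      exact hf.comp ih (hm.iterate n)

lemma my_tuo_comp {F : ℕ → ℂ → ℂ} {g : ℂ → ℂ} {K : Set ℂ}
    (hF : TendstoUniformlyOn F g atTop K) {φ : ℕ → ℕ} (hφ : Tendsto φ atTop atTop) :
    TendstoUniformlyOn (fun k => F (φ k)) g atTop K := by
  rw [Metric.tendstoUniformlyOn_iff] at hF ⊢
  intro ε hε
  exact hφ.eventually (hF ε hε)

lemma my_tendsto_comp_of_tuo {F : ℕ → ℂ → ℂ} {g : ℂ → ℂ} {K : Set ℂ}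
    (hF : TendstoUniformlyOn F g atTop K) {u : ℕ → ℂ} {x : ℂ}
    (hu : Tendsto u atTop (𝓝 x)) (huK : ∀ᶠ k in atTop, u k ∈ K)
    (hg : ContinuousAt g x) :
    Tendsto (fun k => F k (u k)) atTop (𝓝 (g x)) := by
  rw [Metric.tendsto_nhds]
  intro ε hε
  have h1 := Metric.tendstoUniformlyOn_iff.mp hF (ε/2) (by linarith)
  have h2 : Tendsto (fun k => g (u k)) atTop (𝓝 (g x)) := hg.tendsto.comp hu
  have h3 := Metric.tendsto_nhds.mp h2 (ε/2) (by linarith)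
  filter_upwards [h1, h3, huK] with k hk1 hk3 hkK
  calc dist (F k (u k)) (g x) ≤ dist (F k (u k)) (g (u k)) + dist (g (u k)) (g x) :=
        dist_triangle _ _ _
    _ < ε/2 + ε/2 := by
        apply add_lt_add _ hk3
        rw [dist_comm]
        exact hk1 (u k) hkK
    _ = ε := by ring

theorem denjoy_wolff_superattracting (f : ℂ → ℂ)
    (hf : DifferentiableOn ℂ f (ball (0 : ℂ) 1))
    (hmaps : Set.MapsTo f (ball (0 : ℂ) 1) (ball (0 : ℂ) 1))
    (hni : ¬ Set.InjOn f (ball (0 : ℂ) 1))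
    (hna : ¬ IsEllipticAutomorphism f)
    (c : ℂ) (hc : c ∈ ball (0 : ℂ) 1)
    (nk : ℕ → ℕ) (hnk : StrictMono nk)
    (hto : Tendsto (fun k => f^[nk k] c) atTop (nhds c))
    (ε : ℝ) (hε : 0 < ε) (d : ℝ) (hd : 1 < d)
    (hfast : ∀ k, dist (f^[nk k] c) c ≤ Real.exp (-ε * d ^ (nk k))) :
    f c = c ∧ ‖deriv f c‖ < 1 := by
  rw [Set.InjOn] at hni
  push_neg at hni
  obtain ⟨a, ha, b, hb, hfab, hab⟩ := hni
  have hfc : f c ∈ ball (0:ℂ) 1 := hmaps hc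
  set M : ℝ := max (max ‖a‖ ‖b‖) (max ‖c‖ ‖f c‖) with hM
  have hM1 : M < 1 := by
    rw [mem_ball_zero_iff] at ha hb hc hfc
    exact max_lt (max_lt ha hb) (max_lt hc hfc)
  have hM0 : 0 ≤ M := le_trans (norm_nonneg a) (le_trans (le_max_left _ _) (le_max_left _ _))
  set s : ℝ := (1 + M)/2 with hsdef
  set ρ : ℝ := (3 + M)/4 with hρdef
  have hMs : M < s := by rw [hsdef]; linarith
  have hs0 : 0 ≤ s := by rw [hsdef]; linarith
  have hsρ : s < ρ := by rw [hsdef, hρdef]; linarith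
  have hρ1 : ρ < 1 := by rw [hρdef]; linarith
  have hρ0 : 0 < ρ := by rw [hρdef]; linarith
  have hs1 : s < 1 := by rw [hsdef]; linarith
  have hdiffn : ∀ n, DifferentiableOn ℂ (f^[n]) (ball (0:ℂ) 1) := my_iterate_diff hf hmaps
  have hmapsn : ∀ n, Set.MapsTo (f^[n]) (ball (0:ℂ) 1) (ball (0:ℂ) 1) := fun n => hmaps.iterate n
  obtain ⟨σ₁, hσ₁, h, hU1⟩ := my_montel s ρ hs0 hsρ hρ1 hρ0 (fun k => f^[nk k])
    (fun k => hdiffn _) (fun k => hmapsn _)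
  set m : ℕ → ℕ := fun j => nk (σ₁ (j+1)) - nk (σ₁ j) with hm
  have hmlt : ∀ j, nk (σ₁ j) < nk (σ₁ (j+1)) := fun j => hnk (hσ₁ (lt_add_one j))
  have hmadd : ∀ j, m j + nk (σ₁ j) = nk (σ₁ (j+1)) := fun j => Nat.sub_add_cancel (hmlt j).le
  have hm1 : ∀ j, 1 ≤ m j := by
    intro j
    have h1 := hmadd j
    have h2 := hmlt j
    omega
  obtain ⟨σ₂, hσ₂, g, hU2⟩ := my_montel s ρ hs0 hsρ hρ1 hρ0 (fun j => f^[m j])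
    (fun j => hdiffn _) (fun j => hmapsn _)
  -- memberships
  have hcball : c ∈ ball (0:ℂ) s := by
    rw [mem_ball_zero_iff]
    calc ‖c‖ ≤ M := le_trans (le_max_left _ _) (le_max_right _ _)
      _ < s := hMs
  have hfcball : f c ∈ ball (0:ℂ) s := by
    rw [mem_ball_zero_iff]
    calc ‖f c‖ ≤ M := le_trans (le_max_right _ _) (le_max_right _ _)
      _ < s := hMs
  have haball : a ∈ ball (0:ℂ) s := by
    rw [mem_ball_zero_iff]
    calc ‖a‖ ≤ M := le_trans (le_max_left _ _) (le_max_left _ _)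
      _ < s := hMs
  have hbball : b ∈ ball (0:ℂ) s := by
    rw [mem_ball_zero_iff]
    calc ‖b‖ ≤ M := le_trans (le_max_right _ _) (le_max_left _ _)
      _ < s := hMs
  have hball_s_sub : ball (0:ℂ) s ⊆ ball (0:ℂ) 1 := ball_subset_ball hs1.le
  have hdh : DifferentiableOn ℂ h (ball (0:ℂ) s) :=
    (hU1.tendstoLocallyUniformlyOn.mono ball_subset_closedBall).differentiableOn
      (Eventually.of_forall (fun k => (hdiffn _).mono hball_s_sub)) isOpen_ball
  have hdg : DifferentiableOn ℂ g (ball (0:ℂ) s) :=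
    (hU2.tendstoLocallyUniformlyOn.mono ball_subset_closedBall).differentiableOn
      (Eventually.of_forall (fun k => (hdiffn _).mono hball_s_sub)) isOpen_ball
  have hto1 : Tendsto (fun k => f^[nk (σ₁ k)] c) atTop (𝓝 c) := hto.comp hσ₁.tendsto_atTop
  have hhc : h c = c :=
    tendsto_nhds_unique (hU1.tendsto_at (ball_subset_closedBall hcball)) hto1
  -- the key identity near c
  have hcont_h : ContinuousAt h c :=
    (hdh.differentiableAt (isOpen_ball.mem_nhds hcball)).continuousAt
  have hmemball : ∀ᶠ z in 𝓝 c, h z ∈ ball (0:ℂ) s :=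
    hcont_h.eventually_mem (by rw [hhc]; exact isOpen_ball.mem_nhds hcball)
  have hz_ball : ∀ᶠ z in 𝓝 c, z ∈ ball (0:ℂ) s :=
    eventually_of_mem (isOpen_ball.mem_nhds hcball) (fun z hz => hz)
  have hkey : ∀ᶠ z in 𝓝 c, g (h z) = h z := by
    filter_upwards [hmemball, hz_ball] with z hz1 hz2
    have hzc : z ∈ closedBall (0:ℂ) s := ball_subset_closedBall hz2
    have t2 : Tendsto (fun k => f^[nk (σ₁ (σ₂ k))] z) atTop (𝓝 (h z)) :=
      (my_tuo_comp hU1 hσ₂.tendsto_atTop).tendsto_at hzc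
    have hφ1 : Tendsto (fun k => σ₂ k + 1) atTop atTop :=
      (tendsto_add_atTop_nat 1).comp hσ₂.tendsto_atTop
    have t1 : Tendsto (fun k => f^[nk (σ₁ (σ₂ k + 1))] z) atTop (𝓝 (h z)) :=
      (my_tuo_comp hU1 hφ1).tendsto_at hzc
    have hev : ∀ᶠ k in atTop, f^[nk (σ₁ (σ₂ k))] z ∈ closedBall (0:ℂ) s :=
      t2.eventually (eventually_of_mem
        (mem_of_superset (isOpen_ball.mem_nhds hz1) ball_subset_closedBall) (fun y hy => hy))
    have hcont_g : ContinuousAt g (h z) :=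
      (hdg.differentiableAt (isOpen_ball.mem_nhds hz1)).continuousAt
    have t3 : Tendsto (fun k => f^[m (σ₂ k)] (f^[nk (σ₁ (σ₂ k))] z)) atTop (𝓝 (g (h z))) :=
      my_tendsto_comp_of_tuo hU2 t2 hev hcont_g
    have hiter : ∀ k, f^[nk (σ₁ (σ₂ k + 1))] z = f^[m (σ₂ k)] (f^[nk (σ₁ (σ₂ k))] z) := by
      intro k
      rw [← hmadd (σ₂ k), Function.iterate_add_apply]
    have t1' : Tendsto (fun k => f^[m (σ₂ k)] (f^[nk (σ₁ (σ₂ k))] z)) atTop (𝓝 (h z)) := by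
      simpa only [hiter] using t1
    exact tendsto_nhds_unique t3 t1'
  -- dichotomy
  have hanalytic : AnalyticAt ℂ h c := hdh.analyticAt (isOpen_ball.mem_nhds hcball)
  rcases hanalytic.eventually_constant_or_nhds_le_map_nhds with hconst | hopen
  · -- h is locally constant near c, hence ≡ c on the ball
    have hh_an : AnalyticOnNhd ℂ h (ball (0:ℂ) s) := hdh.analyticOnNhd isOpen_ball
    have hconst_an : AnalyticOnNhd ℂ (fun _ : ℂ => c) (ball (0:ℂ) s) := analyticOnNhd_const
    have heqh : Set.EqOn h (fun _ => c) (ball (0:ℂ) s) :=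
      hh_an.eqOn_of_preconnected_of_eventuallyEq hconst_an (convex_ball 0 s).isPreconnected
        hcball (by filter_upwards [hconst] with z hz; rw [hz, hhc])
    have w1 : Tendsto (fun k => f^[nk (σ₁ k)] (f c)) atTop (𝓝 c) := by
      have := hU1.tendsto_at (ball_subset_closedBall hfcball)
      rwa [heqh hfcball] at this
    have hcontf : ContinuousAt f c :=
      (hf.differentiableAt (isOpen_ball.mem_nhds hc)).continuousAt
    have w2 : Tendsto (fun k => f (f^[nk (σ₁ k)] c)) atTop (𝓝 (f c)) :=
      hcontf.tendsto.comp hto1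
    have hseq : ∀ k, f^[nk (σ₁ k)] (f c) = f (f^[nk (σ₁ k)] c) := by
      intro k
      rw [← Function.iterate_succ_apply, Function.iterate_succ_apply']
    have w1' : Tendsto (fun k => f (f^[nk (σ₁ k)] c)) atTop (𝓝 c) := by
      simpa only [hseq] using w1
    have hfix : f c = c := tendsto_nhds_unique w2 w1'
    refine ⟨hfix, ?_⟩
    -- derivative estimate
    have hTLU : TendstoLocallyUniformlyOn (fun k => f^[nk (σ₁ k)]) (fun _ => c) atTop
        (ball (0:ℂ) s) :=
      ((hU1.tendstoLocallyUniformlyOn).mono ball_subset_closedBall).congr_right heqh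
    have hder := hTLU.deriv (Eventually.of_forall (fun k => (hdiffn _).mono hball_s_sub))
      isOpen_ball
    have hder_c : Tendsto (fun k => deriv (f^[nk (σ₁ k)]) c) atTop (𝓝 0) := by
      have := hder.tendsto_at hcball
      simpa [Function.comp, deriv_const] using this
    have hdfc : HasDerivAt f (deriv f c) c :=
      (hf.differentiableAt (isOpen_ball.mem_nhds hc)).hasDerivAt
    have hiterd : ∀ n, deriv (f^[n]) c = (deriv f c) ^ n := by
      intro n
      have h5 : HasDerivAt (f^[n]) ((deriv f c) ^ n) c := HasDerivAt.iterate c hdfc hfix n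
      exact h5.deriv
    have hpow : Tendsto (fun k => (deriv f c) ^ (nk (σ₁ k))) atTop (𝓝 0) := by
      simpa only [hiterd] using hder_c
    by_contra hge
    push_neg at hge
    have h1 : ∀ k, (1:ℝ) ≤ ‖(deriv f c) ^ (nk (σ₁ k))‖ := by
      intro k
      rw [norm_pow]
      apply one_le_pow₀
      exact hge
    have h2 : Tendsto (fun k => ‖(deriv f c) ^ (nk (σ₁ k))‖) atTop (𝓝 0) := by
      simpa using hpow.norm
    have h3 := h2.eventually (gt_mem_nhds (by norm_num : (0:ℝ) < 1))
    obtain ⟨k, hk⟩ := h3.exists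
    exact absurd (h1 k) (not_le.mpr hk)
  · -- open mapping case: contradiction with non-injectivity
    exfalso
    have hEg : ∀ᶠ w in 𝓝 c, g w = w := by
      have h1 : {w : ℂ | g w = w} ∈ map h (𝓝 c) := by
        rw [mem_map]
        exact hkey
      have h2 := hopen h1
      rwa [hhc] at h2
    have hg_an : AnalyticOnNhd ℂ g (ball (0:ℂ) s) := hdg.analyticOnNhd isOpen_ball
    have hid_an : AnalyticOnNhd ℂ (fun w : ℂ => w) (ball (0:ℂ) s) := analyticOnNhd_id
    have heq : Set.EqOn g (fun w => w) (ball (0:ℂ) s) :=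
      hg_an.eqOn_of_preconnected_of_eventuallyEq hid_an (convex_ball 0 s).isPreconnected
        hcball hEg
    have hfa : ∀ k, f^[m (σ₂ k)] a = f^[m (σ₂ k)] b := by
      intro k
      obtain ⟨t, ht⟩ : ∃ t, m (σ₂ k) = t + 1 := ⟨m (σ₂ k) - 1, by have := hm1 (σ₂ k); omega⟩
      rw [ht, Function.iterate_succ_apply, Function.iterate_succ_apply, hfab]
    have ta : Tendsto (fun k => f^[m (σ₂ k)] a) atTop (𝓝 a) := by
      have := hU2.tendsto_at (ball_subset_closedBall haball)
      rwa [heq haball] at this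
    have tb : Tendsto (fun k => f^[m (σ₂ k)] b) atTop (𝓝 b) := by
      have := hU2.tendsto_at (ball_subset_closedBall hbball)
      rwa [heq hbball] at this
    have ta' : Tendsto (fun k => f^[m (σ₂ k)] b) atTop (𝓝 a) := by
      simpa only [hfa] using ta
    exact hab (tendsto_nhds_unique ta' tb)
end
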